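/- Let D ≥ 1, let H be a real Hilbert space, let a : ℝ^D → H be a map, and set κ(θ,θ') := ⟨a(θ), a(θ')⟩ for θ,θ' ∈ ℝ^D. Assume κ is an admissible kernel and that S = {θ_1,…,θ_k} ⊆ ℝ^D (with θ_1,…,θ_k pairwise distinct) is admissible with respect to κ. Then the Gram matrix G ∈ ℝ^{k×k} with entries G[ℓ,ℓ'] = κ(θ_ℓ, θ_{ℓ'}) is invertible, and for every θ ∈ ℝ^D \ S one has ‖G⁻¹ g_θ‖₁ < 1, where g_θ ∈ ℝ^k has entries g_θ[ℓ] = κ(θ, θ_ℓ). -/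

import Mathlib

open Filter Topology

/-- A kernel on `ℝ^D` satisfies the vanishing property. -/
def VanishingProperty {D : ℕ} (κ : (Fin D → ℝ) → (Fin D → ℝ) → ℝ) : Prop :=
  ∀ ε : ℝ, 0 < ε → ∀ θ : Fin D → ℝ,
    ∃ K : Set (Fin D → ℝ), IsCompact K ∧ ∀ θ' ∉ K, κ θ' θ < ε

/-- An admissible kernel: unit norm on the diagonal, continuity, vanishing property,
and `0 ≤ κ(θ,θ') < 1` off the diagonal. -/
def AdmissibleKernel {D : ℕ} (κ : (Fin D → ℝ) → (Fin D → ℝ) → ℝ) : Prop :=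
  (∀ θ, κ θ θ = 1) ∧
  (∀ θ, Filter.Tendsto (fun θ' => κ θ θ') (nhds θ) (nhds 1)) ∧
  VanishingProperty κ ∧
  (∀ θ θ', θ ≠ θ' → 0 ≤ κ θ θ' ∧ κ θ θ' < 1)

/-- A finite family of pairwise distinct points `θs : Fin k → ℝ^D` is admissible
with respect to the kernel `κ`. -/
def AdmissibleSupport {D k : ℕ} (κ : (Fin D → ℝ) → (Fin D → ℝ) → ℝ)
    (θs : Fin k → (Fin D → ℝ)) : Prop :=
  ∀ T : Finset (Fin k), T.Nonempty →
    ∀ c : Fin k → ℝ, (∀ ℓ ∈ T, 0 < c ℓ) → (∑ ℓ ∈ T, c ℓ) < 1 →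
      ((∀ θm : Fin D → ℝ,
          (∀ θ : Fin D → ℝ,
            (∑ ℓ ∈ T, c ℓ * κ θ (θs ℓ)) ≤ ∑ ℓ ∈ T, c ℓ * κ θm (θs ℓ)) →
          ∃ ℓ ∈ T, θm = θs ℓ) ∧
       (∀ ℓ : Fin k, ℓ ∉ T →
          (∀ ℓ' ∈ T, (∑ j ∈ T, c j * κ (θs ℓ') (θs j)) - κ (θs ℓ') (θs ℓ) ≤ 0) →
          ∀ θ : Fin D → ℝ, (∑ j ∈ T, c j * κ θ (θs j)) - κ θ (θs ℓ) ≤ 0))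

section Aux

variable {D k : ℕ} {H : Type*} [NormedAddCommGroup H] [InnerProductSpace ℝ H]

private lemma kappa_nonneg (κ : (Fin D → ℝ) → (Fin D → ℝ) → ℝ)
    (hker : AdmissibleKernel κ) (θ θ' : Fin D → ℝ) : 0 ≤ κ θ θ' := by
  by_cases h : θ = θ'
  · subst h; rw [hker.1]; norm_num
  · exact (hker.2.2.2 θ θ' h).1

private lemma kappa_symm (a : (Fin D → ℝ) → H) (κ : (Fin D → ℝ) → (Fin D → ℝ) → ℝ)
    (hκ : ∀ θ θ' : Fin D → ℝ, κ θ θ' = inner ℝ (a θ) (a θ')) (θ θ' : Fin D → ℝ) :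
    κ θ θ' = κ θ' θ := by
  rw [hκ, hκ]; exact (real_inner_comm _ _).symm

private lemma continuous_a (a : (Fin D → ℝ) → H) (κ : (Fin D → ℝ) → (Fin D → ℝ) → ℝ)
    (hκ : ∀ θ θ' : Fin D → ℝ, κ θ θ' = inner ℝ (a θ) (a θ'))
    (hker : AdmissibleKernel κ) : Continuous a := by
  rw [continuous_iff_continuousAt]
  intro θ
  have hnorm : ∀ ψ : Fin D → ℝ, ‖a ψ‖ ^ 2 = 1 := by
    intro ψ
    rw [← real_inner_self_eq_norm_sq, ← hκ, hker.1]
  have h1 : Tendsto (fun θ' => κ θ θ') (nhds θ) (nhds 1) := hker.2.1 θ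
  rw [ContinuousAt, Metric.tendsto_nhds]
  intro ε hε
  have h2 : ∀ᶠ θ' in nhds θ, dist (κ θ θ') 1 < ε ^ 2 / 2 :=
    Metric.tendsto_nhds.mp h1 _ (by positivity)
  filter_upwards [h2] with θ' hθ'
  have hd : dist (a θ') (a θ) ^ 2 = 2 - 2 * κ θ θ' := by
    rw [dist_eq_norm, norm_sub_sq_real, hnorm, hnorm]
    have : (inner ℝ (a θ') (a θ) : ℝ) = κ θ θ' := by
      rw [hκ]; exact real_inner_comm _ _
    rw [this]; ring
  have habs : |κ θ θ' - 1| < ε ^ 2 / 2 := by rwa [Real.dist_eq] at hθ'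
  have h3 : dist (a θ') (a θ) ^ 2 < ε ^ 2 := by
    rcases abs_lt.mp habs with ⟨hl, _⟩
    rw [hd]; nlinarith
  exact lt_of_pow_lt_pow_left₀ 2 hε.le h3

private lemma cont_kappa (a : (Fin D → ℝ) → H) (κ : (Fin D → ℝ) → (Fin D → ℝ) → ℝ)
    (hκ : ∀ θ θ' : Fin D → ℝ, κ θ θ' = inner ℝ (a θ) (a θ'))
    (hker : AdmissibleKernel κ) (ψ0 : Fin D → ℝ) :
    Continuous fun θ => κ θ ψ0 := by
  have : (fun θ => κ θ ψ0) = fun θ => (inner ℝ (a θ) (a ψ0) : ℝ) :=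
    funext fun θ => hκ θ ψ0
  rw [this]
  exact (continuous_a a κ hκ hker).inner continuous_const

/-- Existence of a global maximizer for a positive combination of kernel translates. -/
private lemma exists_global_max (a : (Fin D → ℝ) → H) (κ : (Fin D → ℝ) → (Fin D → ℝ) → ℝ)
    (hκ : ∀ θ θ' : Fin D → ℝ, κ θ θ' = inner ℝ (a θ) (a θ'))
    (hker : AdmissibleKernel κ) (θs : Fin k → (Fin D → ℝ))
    (T : Finset (Fin k)) (hT : T.Nonempty) (c : Fin k → ℝ) (hc : ∀ ℓ ∈ T, 0 < c ℓ) :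
    ∃ θm, ∀ θ, ∑ ℓ ∈ T, c ℓ * κ θ (θs ℓ) ≤ ∑ ℓ ∈ T, c ℓ * κ θm (θs ℓ) := by
  classical
  obtain ⟨ℓ1, hℓ1⟩ := hT
  set ψ : (Fin D → ℝ) → ℝ := fun θ => ∑ ℓ ∈ T, c ℓ * κ θ (θs ℓ) with hψdef
  have hcont : Continuous ψ :=
    continuous_finset_sum T fun ℓ _ => continuous_const.mul (cont_kappa a κ hκ hker (θs ℓ))
  have hSc : 0 < ∑ ℓ ∈ T, c ℓ := Finset.sum_pos hc ⟨ℓ1, hℓ1⟩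
  set Sc := ∑ ℓ ∈ T, c ℓ with hScdef
  set ε := c ℓ1 / (2 * Sc) with hεdef
  have hε : 0 < ε := by
    have := hc ℓ1 hℓ1
    positivity
  choose K hKc hKb using fun ℓ : Fin k => hker.2.2.1 ε hε (θs ℓ)
  set Kb : Set (Fin D → ℝ) := (⋃ ℓ, K ℓ) ∪ {θs ℓ1} with hKbdef
  have hKbc : IsCompact Kb := (isCompact_iUnion fun ℓ => hKc ℓ).union isCompact_singleton
  have hne : Kb.Nonempty := ⟨θs ℓ1, Or.inr rfl⟩
  obtain ⟨θm, hθmK, hmax⟩ := hKbc.exists_isMaxOn hne hcont.continuousOn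
  rw [isMaxOn_iff] at hmax
  refine ⟨θm, fun θ => ?_⟩
  by_cases hθK : θ ∈ Kb
  · exact hmax θ hθK
  · have hθnK : ∀ ℓ, θ ∉ K ℓ := by
      intro ℓ hmem
      exact hθK (Or.inl (Set.mem_iUnion.mpr ⟨ℓ, hmem⟩))
    have h1 : ψ θ ≤ Sc * ε := by
      rw [hScdef, Finset.sum_mul]
      apply Finset.sum_le_sum
      intro ℓ hℓ
      exact mul_le_mul_of_nonneg_left (hKb ℓ θ (hθnK ℓ)).le (hc ℓ hℓ).le
    have h2 : Sc * ε = c ℓ1 / 2 := by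
      rw [hεdef]
      field_simp
    have h3 : c ℓ1 ≤ ψ (θs ℓ1) := by
      have h := Finset.single_le_sum
        (f := fun ℓ => c ℓ * κ (θs ℓ1) (θs ℓ))
        (fun i hi => mul_nonneg (hc i hi).le (kappa_nonneg κ hker _ _)) hℓ1
      show c ℓ1 ≤ ∑ ℓ ∈ T, c ℓ * κ (θs ℓ1) (θs ℓ)
      calc c ℓ1 = c ℓ1 * κ (θs ℓ1) (θs ℓ1) := by rw [hker.1, mul_one]
        _ ≤ ∑ ℓ ∈ T, c ℓ * κ (θs ℓ1) (θs ℓ) := h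
    have h4 : ψ (θs ℓ1) ≤ ψ θm := hmax _ (Or.inr rfl)
    have := hc ℓ1 hℓ1
    nlinarith

/-- Strict bound via condition (i) of admissibility: a positive combination whose
values at the support atoms all equal `β` is `< β` at any non-atom. -/
private lemma cert_lt_one (a : (Fin D → ℝ) → H) (κ : (Fin D → ℝ) → (Fin D → ℝ) → ℝ)
    (hκ : ∀ θ θ' : Fin D → ℝ, κ θ θ' = inner ℝ (a θ) (a θ'))
    (hker : AdmissibleKernel κ) (θs : Fin k → (Fin D → ℝ))
    (hsupp : AdmissibleSupport κ θs)
    (T : Finset (Fin k)) (hT : T.Nonempty) (c : Fin k → ℝ)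
    (hc : ∀ ℓ ∈ T, 0 < c ℓ) (hsum : ∑ ℓ ∈ T, c ℓ < 1) (β : ℝ)
    (hinterp : ∀ ℓ ∈ T, ∑ j ∈ T, c j * κ (θs ℓ) (θs j) = β)
    (τ : Fin D → ℝ) (hτ : ∀ ℓ ∈ T, τ ≠ θs ℓ) :
    ∑ j ∈ T, c j * κ τ (θs j) < β := by
  obtain ⟨θm, hmax⟩ := exists_global_max a κ hκ hker θs T hT c hc
  obtain ⟨m, hm, hθm⟩ := (hsupp T hT c hc hsum).1 θm hmax
  have hβ : ∀ θ, ∑ j ∈ T, c j * κ θ (θs j) ≤ β := by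
    intro θ
    have := hmax θ
    rw [hθm] at this
    calc ∑ j ∈ T, c j * κ θ (θs j) ≤ ∑ j ∈ T, c j * κ (θs m) (θs j) := this
      _ = β := hinterp m hm
  rcases lt_or_eq_of_le (hβ τ) with h | h
  · exact h
  · exfalso
    have hτmax : ∀ θ, ∑ ℓ ∈ T, c ℓ * κ θ (θs ℓ) ≤ ∑ ℓ ∈ T, c ℓ * κ τ (θs ℓ) := by
      intro θ
      rw [h]
      exact hβ θ
    obtain ⟨ℓ, hℓ, hℓeq⟩ := (hsupp T hT c hc hsum).1 τ hτmax
    exact hτ ℓ hℓ hℓeq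

/-- Linear independence of the atoms. -/
private lemma indep (a : (Fin D → ℝ) → H) (κ : (Fin D → ℝ) → (Fin D → ℝ) → ℝ)
    (hκ : ∀ θ θ' : Fin D → ℝ, κ θ θ' = inner ℝ (a θ) (a θ'))
    (hker : AdmissibleKernel κ) (θs : Fin k → (Fin D → ℝ))
    (hinj : Function.Injective θs) (hsupp : AdmissibleSupport κ θs) :
    ∀ u : Fin k → ℝ, (∑ j, u j • a (θs j)) = 0 → u = 0 := by
  classical
  intro u hu
  by_contra hne
  have hpt : ∀ θ, ∑ j, u j * κ θ (θs j) = 0 := by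
    intro θ
    have h0 : (inner ℝ (a θ) (∑ j, u j • a (θs j)) : ℝ) = 0 := by
      rw [hu, inner_zero_right]
    rw [inner_sum] at h0
    have : ∀ j : Fin k, (inner ℝ (a θ) (u j • a (θs j)) : ℝ) = u j * κ θ (θs j) := by
      intro j
      rw [real_inner_smul_right, ← hκ]
    rwa [Finset.sum_congr rfl fun j _ => this j] at h0
  set P := Finset.univ.filter (fun j => 0 < u j) with hPdef
  set N := Finset.univ.filter (fun j => u j < 0) with hNdef
  have hNne : N.Nonempty := by
    rw [Finset.filter_nonempty_iff]
    by_contra hN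
    push_neg at hN
    have hunn : ∀ j, 0 ≤ u j := fun j => hN j (Finset.mem_univ j)
    obtain ⟨ℓ0, hℓ0⟩ : ∃ ℓ0, 0 < u ℓ0 := by
      by_contra h
      push_neg at h
      exact hne (funext fun j => le_antisymm (h j) (hunn j))
    have hle : u ℓ0 * κ (θs ℓ0) (θs ℓ0) ≤ ∑ j, u j * κ (θs ℓ0) (θs j) :=
      Finset.single_le_sum (f := fun j => u j * κ (θs ℓ0) (θs j))
        (fun i _ => mul_nonneg (hunn i) (kappa_nonneg κ hker _ _)) (Finset.mem_univ ℓ0)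
    rw [hker.1, mul_one, hpt (θs ℓ0)] at hle
    exact absurd hle (not_le.mpr hℓ0)
  have hPne : P.Nonempty := by
    rw [Finset.filter_nonempty_iff]
    by_contra hP
    push_neg at hP
    have hunp : ∀ j, u j ≤ 0 := fun j => hP j (Finset.mem_univ j)
    obtain ⟨ℓ0, hℓ0⟩ : ∃ ℓ0, u ℓ0 < 0 := by
      by_contra h
      push_neg at h
      exact hne (funext fun j => le_antisymm (hunp j) (h j))
    have hle : -(u ℓ0 * κ (θs ℓ0) (θs ℓ0)) ≤ ∑ j, -(u j * κ (θs ℓ0) (θs j)) :=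
      Finset.single_le_sum (f := fun j => -(u j * κ (θs ℓ0) (θs j)))
        (fun i _ => neg_nonneg.mpr (mul_nonpos_of_nonpos_of_nonneg (hunp i)
          (kappa_nonneg κ hker _ _))) (Finset.mem_univ ℓ0)
    rw [hker.1, mul_one, Finset.sum_neg_distrib, hpt (θs ℓ0), neg_zero] at hle
    have : 0 ≤ u ℓ0 := by linarith
    exact absurd this (not_le.mpr hℓ0)
  have hsplit : ∀ θ, ∑ j ∈ P, u j * κ θ (θs j) + ∑ j ∈ N, u j * κ θ (θs j) = 0 := by
    intro θ
    have h1 := Finset.sum_filter_add_sum_filter_not Finset.univ (fun j => 0 < u j)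
      (fun j => u j * κ θ (θs j))
    have h2 : ∑ j ∈ Finset.univ.filter (fun j => ¬ 0 < u j), u j * κ θ (θs j)
        = ∑ j ∈ N, u j * κ θ (θs j) := by
      symm
      apply Finset.sum_subset
      · intro j hj
        rw [Finset.mem_filter] at hj ⊢
        exact ⟨hj.1, not_lt.mpr hj.2.le⟩
      · intro j hj hjN
        rw [Finset.mem_filter] at hj
        rw [hNdef, Finset.mem_filter] at hjN
        push_neg at hjN
        have : u j = 0 := le_antisymm (not_lt.mp hj.2) (hjN (Finset.mem_univ j))
        rw [this, zero_mul]
    rw [← h2]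
    rw [h1]
    exact hpt θ
  -- scaling
  set S := (∑ j ∈ P, u j) + ∑ j ∈ N, (-(u j)) with hSdef
  have hSP : 0 < ∑ j ∈ P, u j :=
    Finset.sum_pos (fun j hj => (Finset.mem_filter.mp hj).2) hPne
  have hSN : 0 < ∑ j ∈ N, (-(u j)) :=
    Finset.sum_pos (fun j hj => neg_pos.mpr (Finset.mem_filter.mp hj).2) hNne
  set t := 1 / (S + 1) with htdef
  have hS : 0 < S := by rw [hSdef]; linarith
  have ht : 0 < t := by rw [htdef]; positivity
  have htS : t * S < 1 := by
    rw [htdef]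
    rw [div_mul_eq_mul_div, one_mul, div_lt_one (by linarith)]
    linarith
  set c := fun j => t * u j with hcdef
  set d := fun j => t * (-(u j)) with hddef
  have hcP : ∀ ℓ ∈ P, 0 < c ℓ := fun ℓ hℓ => mul_pos ht (Finset.mem_filter.mp hℓ).2
  have hdN : ∀ ℓ ∈ N, 0 < d ℓ := fun ℓ hℓ =>
    mul_pos ht (neg_pos.mpr (Finset.mem_filter.mp hℓ).2)
  have hcsum : ∑ ℓ ∈ P, c ℓ < 1 := by
    have : ∑ ℓ ∈ P, c ℓ = t * ∑ j ∈ P, u j := by rw [Finset.mul_sum]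
    rw [this]
    have h5 : t * (∑ j ∈ P, u j) ≤ t * S := by
      apply mul_le_mul_of_nonneg_left _ ht.le
      rw [hSdef]; linarith
    linarith
  have hdsum : ∑ ℓ ∈ N, d ℓ < 1 := by
    have : ∑ ℓ ∈ N, d ℓ = t * ∑ j ∈ N, (-(u j)) := by rw [Finset.mul_sum]
    rw [this]
    have h5 : t * (∑ j ∈ N, (-(u j))) ≤ t * S := by
      apply mul_le_mul_of_nonneg_left _ ht.le
      rw [hSdef]; linarith
    linarith
  have hfun : ∀ θ, ∑ ℓ ∈ P, c ℓ * κ θ (θs ℓ) = ∑ ℓ ∈ N, d ℓ * κ θ (θs ℓ) := by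
    intro θ
    have h6 := hsplit θ
    have e1 : ∑ ℓ ∈ P, c ℓ * κ θ (θs ℓ) = t * ∑ ℓ ∈ P, u ℓ * κ θ (θs ℓ) := by
      rw [Finset.mul_sum]
      exact Finset.sum_congr rfl fun ℓ _ => by rw [hcdef]; ring
    have e2 : ∑ ℓ ∈ N, d ℓ * κ θ (θs ℓ) = t * (-(∑ ℓ ∈ N, u ℓ * κ θ (θs ℓ))) := by
      rw [← Finset.sum_neg_distrib, Finset.mul_sum]
      exact Finset.sum_congr rfl fun ℓ _ => by rw [hddef]; ring
    rw [e1, e2]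
    have : ∑ ℓ ∈ P, u ℓ * κ θ (θs ℓ) = -(∑ ℓ ∈ N, u ℓ * κ θ (θs ℓ)) := by linarith
    rw [this]
  obtain ⟨θm, hmax⟩ := exists_global_max a κ hκ hker θs P hPne c hcP
  obtain ⟨ℓp, hp, hqp⟩ := (hsupp P hPne c hcP hcsum).1 θm hmax
  have hmaxN : ∀ θ, ∑ ℓ ∈ N, d ℓ * κ θ (θs ℓ) ≤ ∑ ℓ ∈ N, d ℓ * κ θm (θs ℓ) := by
    intro θ
    rw [← hfun θ, ← hfun θm]
    exact hmax θ
  obtain ⟨ℓn, hn, hqn⟩ := (hsupp N hNne d hdN hdsum).1 θm hmaxN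
  have : ℓp = ℓn := hinj (hqp ▸ hqn : θs ℓp = θs ℓn)
  rw [this] at hp
  have h7 := (Finset.mem_filter.mp hp).2
  have h8 := (Finset.mem_filter.mp hn).2
  linarith

/-- Solvability of the restricted Gram system. -/
private lemma solvable (a : (Fin D → ℝ) → H) (θs : Fin k → (Fin D → ℝ))
    (G : Matrix (Fin k) (Fin k) ℝ)
    (hGram : ∀ i j, G i j = (inner ℝ (a (θs i)) (a (θs j)) : ℝ))
    (hindep : ∀ u : Fin k → ℝ, (∑ j, u j • a (θs j)) = 0 → u = 0)
    (T : Finset (Fin k)) (b : Fin k → ℝ) :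
    ∃ v : Fin k → ℝ, ∀ ℓ ∈ T, ∑ j ∈ T, v j * G ℓ j = b ℓ := by
  classical
  set M : Matrix T T ℝ := fun i j => G i.1 j.1 with hMdef
  have hsumz : ∀ w : T → ℝ, M.mulVec w = 0 →
      (∑ j, (if h : j ∈ T then w ⟨j, h⟩ else 0) • a (θs j)) = 0 := by
    intro w hMw
    set u : Fin k → ℝ := fun j => if h : j ∈ T then w ⟨j, h⟩ else 0 with hudef
    have hrow : ∀ i : Fin k, i ∈ T → ∑ j, u j * G i j = 0 := by
      intro i hi
      have e1 : ∑ j, u j * G i j = ∑ j ∈ T, u j * G i j := by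
        symm
        apply Finset.sum_subset (Finset.subset_univ T)
        intro x _ hx
        rw [hudef]
        simp [hx]
      have e2 : ∑ j ∈ T, u j * G i j = ∑ j : T, w j * G i j.1 := by
        rw [← Finset.sum_coe_sort T (fun j => u j * G i j)]
        apply Finset.sum_congr rfl
        intro j _
        rw [hudef]
        simp [j.2]
      have e3 : ∑ j : T, w j * G i j.1 = (M.mulVec w) ⟨i, hi⟩ := by
        rw [Matrix.mulVec, dotProduct]
        apply Finset.sum_congr rfl
        intro j _
        rw [hMdef]
        ring
      rw [e1, e2, e3, hMw]
      rfl
    have hzz : (inner ℝ (∑ j, u j • a (θs j)) (∑ j, u j • a (θs j)) : ℝ) = 0 := by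
      rw [sum_inner]
      apply Finset.sum_eq_zero
      intro i _
      rw [real_inner_smul_left, inner_sum]
      have : ∀ j : Fin k, (inner ℝ (a (θs i)) (u j • a (θs j)) : ℝ) = u j * G i j := by
        intro j
        rw [real_inner_smul_right, hGram]
      rw [Finset.sum_congr rfl fun j _ => this j]
      by_cases hi : i ∈ T
      · rw [hrow i hi, mul_zero]
      · rw [hudef]
        simp [hi]
    exact inner_self_eq_zero.mp hzz
  have hdet : M.det ≠ 0 := by
    intro h0
    obtain ⟨w, hw0, hMw⟩ := Matrix.exists_mulVec_eq_zero_iff.mpr h0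
    have := hindep _ (hsumz w hMw)
    apply hw0
    funext j
    have hj := congrFun this j.1
    simpa [dif_pos j.2] using hj
  set w := M⁻¹.mulVec (fun i : T => b i.1) with hwdef
  have hMw : M.mulVec w = fun i : T => b i.1 := by
    rw [hwdef, Matrix.mulVec_mulVec, Matrix.mul_nonsing_inv _ (isUnit_iff_ne_zero.mpr hdet),
      Matrix.one_mulVec]
  refine ⟨fun j => if h : j ∈ T then w ⟨j, h⟩ else 0, ?_⟩
  intro ℓ hℓ
  have e2 : ∑ j ∈ T, (if h : j ∈ T then w ⟨j, h⟩ else 0) * G ℓ j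
      = ∑ j : T, w j * G ℓ j.1 := by
    rw [← Finset.sum_coe_sort T (fun j => (if h : j ∈ T then w ⟨j, h⟩ else 0) * G ℓ j)]
    apply Finset.sum_congr rfl
    intro j _
    simp [j.2]
  have e3 : ∑ j : T, w j * G ℓ j.1 = (M.mulVec w) ⟨ℓ, hℓ⟩ := by
    rw [Matrix.mulVec, dotProduct]
    apply Finset.sum_congr rfl
    intro j _
    rw [hMdef]
    ring
  rw [e2, e3, hMw]

/-- Schur-type pivot formula. -/
private lemma schur (G : Matrix (Fin k) (Fin k) ℝ)
    (hGsymm : ∀ i j, G i j = G j i) (hGdiag : ∀ i, G i i = 1)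
    (T : Finset (Fin k)) (ℓ : Fin k) (hℓ : ℓ ∈ T) (b : Fin k → ℝ) (v c : Fin k → ℝ)
    (hv : ∀ ℓ' ∈ T, ∑ j ∈ T, v j * G ℓ' j = b ℓ')
    (hc : ∀ ℓ' ∈ T.erase ℓ, ∑ j ∈ T.erase ℓ, c j * G ℓ' j = G ℓ' ℓ) :
    v ℓ * (1 - ∑ j ∈ T.erase ℓ, c j * G ℓ j) = b ℓ - ∑ j ∈ T.erase ℓ, c j * b j := by
  classical
  set T' := T.erase ℓ with hT'def
  set u : Fin k → ℝ := fun j => v j + v ℓ * c j with hudef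
  have hrow : ∀ ℓ' ∈ T', ∑ j ∈ T', u j * G ℓ' j = b ℓ' := by
    intro ℓ' hℓ'
    have h1 : ∑ j ∈ T', u j * G ℓ' j
        = ∑ j ∈ T', v j * G ℓ' j + v ℓ * ∑ j ∈ T', c j * G ℓ' j := by
      rw [Finset.mul_sum, ← Finset.sum_add_distrib]
      apply Finset.sum_congr rfl
      intro j _
      rw [hudef]
      ring
    have h2 : ∑ j ∈ T', v j * G ℓ' j + v ℓ * G ℓ' ℓ = ∑ j ∈ T, v j * G ℓ' j := by
      have := Finset.sum_erase_add T (fun j => v j * G ℓ' j) hℓ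
      rw [← this]
    rw [h1, hc ℓ' hℓ', h2]
    exact hv ℓ' (Finset.mem_of_mem_erase hℓ')
  have hstep2 : ∑ j ∈ T', u j * G ℓ j = ∑ i ∈ T', c i * b i := by
    have h3 : ∀ j ∈ T', G ℓ j = ∑ i ∈ T', c i * G j i := by
      intro j hj
      rw [hGsymm ℓ j]
      exact (hc j hj).symm
    calc ∑ j ∈ T', u j * G ℓ j = ∑ j ∈ T', u j * ∑ i ∈ T', c i * G j i :=
          Finset.sum_congr rfl fun j hj => by rw [h3 j hj]
      _ = ∑ j ∈ T', ∑ i ∈ T', c i * (u j * G j i) := by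
          apply Finset.sum_congr rfl
          intro j _
          rw [Finset.mul_sum]
          apply Finset.sum_congr rfl
          intro i _
          ring
      _ = ∑ i ∈ T', ∑ j ∈ T', c i * (u j * G j i) := Finset.sum_comm
      _ = ∑ i ∈ T', c i * b i := by
          apply Finset.sum_congr rfl
          intro i hi
          rw [← Finset.mul_sum]
          congr 1
          have : ∑ j ∈ T', u j * G j i = ∑ j ∈ T', u j * G i j :=
            Finset.sum_congr rfl fun j _ => by rw [hGsymm j i]
          rw [this]
          exact hrow i hi
  have hexp : ∑ j ∈ T', v j * G ℓ j
      = ∑ j ∈ T', u j * G ℓ j - v ℓ * ∑ j ∈ T', c j * G ℓ j := by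
    rw [Finset.mul_sum, ← Finset.sum_sub_distrib]
    apply Finset.sum_congr rfl
    intro j _
    rw [hudef]
    ring
  have hfin := hv ℓ hℓ
  rw [← Finset.sum_erase_add T (fun j => v j * G ℓ j) hℓ, hGdiag, mul_one] at hfin
  rw [hexp, hstep2] at hfin
  linarith

/-- Positivity of the Schur complement. -/
private lemma sigma_pos (a : (Fin D → ℝ) → H) (θs : Fin k → (Fin D → ℝ))
    (G : Matrix (Fin k) (Fin k) ℝ)
    (hGram : ∀ i j, G i j = (inner ℝ (a (θs i)) (a (θs j)) : ℝ))
    (hGsymm : ∀ i j, G i j = G j i) (hGdiag : ∀ i, G i i = 1)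
    (hindep : ∀ u : Fin k → ℝ, (∑ j, u j • a (θs j)) = 0 → u = 0)
    (T' : Finset (Fin k)) (ℓ : Fin k) (hℓ : ℓ ∉ T') (c : Fin k → ℝ)
    (hc : ∀ ℓ' ∈ T', ∑ j ∈ T', c j * G ℓ' j = G ℓ' ℓ) :
    0 < 1 - ∑ j ∈ T', c j * G ℓ j := by
  classical
  set y := a (θs ℓ) - ∑ j ∈ T', c j • a (θs j) with hydef
  have hyinner : (inner ℝ y y : ℝ) = 1 - ∑ j ∈ T', c j * G ℓ j := by
    rw [hydef, inner_sub_left, inner_sub_right, inner_sub_right]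
    have e1 : (inner ℝ (a (θs ℓ)) (a (θs ℓ)) : ℝ) = 1 := by rw [← hGram, hGdiag]
    have e2 : (inner ℝ (a (θs ℓ)) (∑ j ∈ T', c j • a (θs j)) : ℝ)
        = ∑ j ∈ T', c j * G ℓ j := by
      rw [inner_sum]
      apply Finset.sum_congr rfl
      intro j _
      rw [real_inner_smul_right, hGram]
    have e3 : (inner ℝ (∑ j ∈ T', c j • a (θs j)) (a (θs ℓ)) : ℝ)
        = ∑ j ∈ T', c j * G ℓ j := by
      rw [sum_inner]
      apply Finset.sum_congr rfl
      intro j _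
      rw [hGsymm ℓ j, hGram, real_inner_smul_left]
    have e4 : (inner ℝ (∑ i ∈ T', c i • a (θs i)) (∑ j ∈ T', c j • a (θs j)) : ℝ)
        = ∑ j ∈ T', c j * G ℓ j := by
      rw [sum_inner]
      have : ∀ i ∈ T', (inner ℝ (c i • a (θs i)) (∑ j ∈ T', c j • a (θs j)) : ℝ)
          = c i * G ℓ i := by
        intro i hi
        rw [real_inner_smul_left, inner_sum]
        have h5 : ∀ j : Fin k, j ∈ T' → (inner ℝ (a (θs i)) (c j • a (θs j)) : ℝ)
            = c j * G i j := by
          intro j _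
          rw [real_inner_smul_right, hGram]
        rw [Finset.sum_congr rfl h5, hc i hi, hGsymm i ℓ]
      exact Finset.sum_congr rfl this
    rw [e1, e2, e3, e4]
    ring
  have hynn : (0:ℝ) ≤ inner ℝ y y := real_inner_self_nonneg
  rcases eq_or_lt_of_le hynn with heq | hlt
  · exfalso
    have hy0 : y = 0 := inner_self_eq_zero.mp heq.symm
    set u : Fin k → ℝ :=
      fun j => (if j = ℓ then (1:ℝ) else 0) - (if j ∈ T' then c j else 0) with hudef
    have hsum0 : (∑ j, u j • a (θs j)) = 0 := by
      have e5 : ∀ j : Fin k, u j • a (θs j)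
          = (if j = ℓ then a (θs ℓ) else 0) - (if j ∈ T' then c j • a (θs j) else 0) := by
        intro j
        rw [hudef]
        by_cases h1 : j = ℓ <;> by_cases h2 : j ∈ T' <;>
          simp [h1, h2, sub_smul, one_smul]
      rw [Finset.sum_congr rfl fun j _ => e5 j, Finset.sum_sub_distrib]
      have e6 : ∑ j, (if j = ℓ then a (θs ℓ) else 0) = a (θs ℓ) := by
        rw [Finset.sum_ite_eq' Finset.univ ℓ (fun _ => a (θs ℓ))]
        simp
      have e7 : ∑ j, (if j ∈ T' then c j • a (θs j) else 0)
          = ∑ j ∈ T', c j • a (θs j) := by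
        rw [Finset.sum_ite_mem, Finset.univ_inter]
      rw [e6, e7, ← hydef, hy0]
    have hu0 := hindep u hsum0
    have : u ℓ = 1 := by
      rw [hudef]
      simp [hℓ]
    rw [hu0] at this
    norm_num at this
  · linarith [hyinner ▸ hlt]

/-- The main simultaneous induction: positivity of the interpolation coefficients,
mass bound, and global residual positivity. -/
private lemma main_ind (a : (Fin D → ℝ) → H) (κ : (Fin D → ℝ) → (Fin D → ℝ) → ℝ)
    (hκ : ∀ θ θ' : Fin D → ℝ, κ θ θ' = inner ℝ (a θ) (a θ'))
    (hker : AdmissibleKernel κ) (θs : Fin k → (Fin D → ℝ))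
    (hinj : Function.Injective θs) (hsupp : AdmissibleSupport κ θs)
    (G : Matrix (Fin k) (Fin k) ℝ)
    (hG : ∀ ℓ ℓ', G ℓ ℓ' = κ (θs ℓ) (θs ℓ')) :
    ∀ T : Finset (Fin k),
      ((∀ τ : Fin D → ℝ, ∀ v : Fin k → ℝ,
          (∀ ℓ' ∈ T, ∑ j ∈ T, v j * G ℓ' j = κ τ (θs ℓ')) → ∀ ℓ ∈ T, 0 ≤ v ℓ)
      ∧ (∀ τ : Fin D → ℝ, (∀ ℓ ∈ T, τ ≠ θs ℓ) → ∀ v : Fin k → ℝ,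
          (∀ ℓ' ∈ T, ∑ j ∈ T, v j * G ℓ' j = κ τ (θs ℓ')) → ∑ ℓ ∈ T, v ℓ < 1)
      ∧ (∀ ℓ0, ℓ0 ∉ T → ∀ v : Fin k → ℝ,
          (∀ ℓ' ∈ T, ∑ j ∈ T, v j * G ℓ' j = G ℓ' ℓ0) →
          ∀ θ' : Fin D → ℝ, ∑ ℓ ∈ T, v ℓ * κ θ' (θs ℓ) ≤ κ θ' (θs ℓ0))) := by
  classical
  have hGram : ∀ i j, G i j = (inner ℝ (a (θs i)) (a (θs j)) : ℝ) := fun i j => by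
    rw [hG, hκ]
  have hGsymm : ∀ i j, G i j = G j i := fun i j => by
    rw [hGram, hGram]; exact (real_inner_comm _ _).symm
  have hGdiag : ∀ i, G i i = 1 := fun i => by rw [hG, hker.1]
  have hindep := indep a κ hκ hker θs hinj hsupp
  apply Finset.strongInduction
  intro T ih
  -- POS
  have hPOS : ∀ τ : Fin D → ℝ, ∀ v : Fin k → ℝ,
      (∀ ℓ' ∈ T, ∑ j ∈ T, v j * G ℓ' j = κ τ (θs ℓ')) → ∀ ℓ ∈ T, 0 ≤ v ℓ := by
    intro τ v hv ℓ hℓ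
    obtain ⟨cb, hcb⟩ := solvable a θs G hGram hindep (T.erase ℓ) (fun j => G j ℓ)
    have hcb' : ∀ ℓ' ∈ T.erase ℓ, ∑ j ∈ T.erase ℓ, cb j * G ℓ' j = G ℓ' ℓ := by
      intro ℓ' hℓ'
      rw [hcb ℓ' hℓ', hGsymm ℓ' ℓ]
    have hσ : 0 < 1 - ∑ j ∈ T.erase ℓ, cb j * G ℓ j :=
      sigma_pos a θs G hGram hGsymm hGdiag hindep (T.erase ℓ) ℓ
        (Finset.notMem_erase ℓ T) cb hcb'
    have hs := schur G hGsymm hGdiag T ℓ hℓ (fun j => κ τ (θs j)) v cb hv hcb'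
    have hr := (ih (T.erase ℓ) (Finset.erase_ssubset hℓ)).2.2 ℓ
      (Finset.notMem_erase ℓ T) cb hcb' τ
    -- hr : ∑ j ∈ T.erase ℓ, cb j * κ τ (θs j) ≤ κ τ (θs ℓ)
    nlinarith [hs, hσ, hr]
  -- MASS
  have hMASS : ∀ τ : Fin D → ℝ, (∀ ℓ ∈ T, τ ≠ θs ℓ) → ∀ v : Fin k → ℝ,
      (∀ ℓ' ∈ T, ∑ j ∈ T, v j * G ℓ' j = κ τ (θs ℓ')) → ∑ ℓ ∈ T, v ℓ < 1 := by
    intro τ hτ v hv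
    rcases T.eq_empty_or_nonempty with rfl | hTne
    · simp
    obtain ⟨q, hq⟩ := solvable a θs G hGram hindep T (fun _ => (1:ℝ))
    have hqpos : ∀ ℓ ∈ T, 0 < q ℓ := by
      intro ℓ hℓ
      obtain ⟨cb, hcb⟩ := solvable a θs G hGram hindep (T.erase ℓ) (fun j => G j ℓ)
      have hcb' : ∀ ℓ' ∈ T.erase ℓ, ∑ j ∈ T.erase ℓ, cb j * G ℓ' j = G ℓ' ℓ := by
        intro ℓ' hℓ'
        rw [hcb ℓ' hℓ', hGsymm ℓ' ℓ]
      have hσ : 0 < 1 - ∑ j ∈ T.erase ℓ, cb j * G ℓ j :=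
        sigma_pos a θs G hGram hGsymm hGdiag hindep (T.erase ℓ) ℓ
          (Finset.notMem_erase ℓ T) cb hcb'
      have hs := schur G hGsymm hGdiag T ℓ hℓ (fun _ => (1:ℝ)) q cb hq hcb'
      -- hs : q ℓ * σ = 1 - ∑ j, cb j * 1
      have hrows : ∀ ℓ' ∈ T.erase ℓ, ∑ j ∈ T.erase ℓ, cb j * G ℓ' j = κ (θs ℓ) (θs ℓ') := by
        intro ℓ' hℓ'
        rw [hcb' ℓ' hℓ', hG, kappa_symm a κ hκ]
      have hτ' : ∀ ℓ' ∈ T.erase ℓ, θs ℓ ≠ θs ℓ' := by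
        intro ℓ' hℓ' h
        exact Finset.ne_of_mem_erase hℓ' (hinj h).symm
      have hm := (ih (T.erase ℓ) (Finset.erase_ssubset hℓ)).2.1 (θs ℓ) hτ' cb hrows
      have hone : ∑ j ∈ T.erase ℓ, cb j * (1:ℝ) = ∑ j ∈ T.erase ℓ, cb j := by
        apply Finset.sum_congr rfl
        intros
        rw [mul_one]
      have hs' : q ℓ * (1 - ∑ j ∈ T.erase ℓ, cb j * G ℓ j)
          = 1 - ∑ j ∈ T.erase ℓ, cb j := by
        rw [← hone]
        simpa using hs
      nlinarith [hs', hσ, hm]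
    set Sq := ∑ j ∈ T, q j with hSqdef
    have hSqpos : 0 < Sq := Finset.sum_pos hqpos hTne
    set t := 1 / (Sq + 1) with htdef
    have ht : 0 < t := by rw [htdef]; positivity
    set c := fun j => t * q j with hcdef
    have hcpos : ∀ ℓ ∈ T, 0 < c ℓ := fun ℓ h => mul_pos ht (hqpos ℓ h)
    have hcsum : ∑ ℓ ∈ T, c ℓ < 1 := by
      have e : ∑ ℓ ∈ T, c ℓ = t * Sq := by rw [hSqdef, Finset.mul_sum]
      rw [e, htdef, div_mul_eq_mul_div, one_mul, div_lt_one (by linarith)]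
      linarith
    have hinterp : ∀ ℓ' ∈ T, ∑ j ∈ T, c j * κ (θs ℓ') (θs j) = t := by
      intro ℓ' hℓ'
      have e : ∑ j ∈ T, c j * κ (θs ℓ') (θs j) = t * ∑ j ∈ T, q j * G ℓ' j := by
        rw [Finset.mul_sum]
        apply Finset.sum_congr rfl
        intro j _
        rw [hG, hcdef]
        ring
      rw [e, hq ℓ' hℓ', mul_one]
    have hcert := cert_lt_one a κ hκ hker θs hsupp T hTne c hcpos hcsum t hinterp τ hτ
    -- identity : ∑ v = ∑ q * κ τ
    have hid : ∑ ℓ ∈ T, v ℓ = ∑ j ∈ T, q j * κ τ (θs j) := by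
      calc ∑ ℓ ∈ T, v ℓ = ∑ ℓ ∈ T, v ℓ * ∑ j ∈ T, q j * G ℓ j := by
            apply Finset.sum_congr rfl
            intro ℓ hℓ
            rw [hq ℓ hℓ, mul_one]
        _ = ∑ ℓ ∈ T, ∑ j ∈ T, q j * (v ℓ * G ℓ j) := by
            apply Finset.sum_congr rfl
            intro ℓ _
            rw [Finset.mul_sum]
            apply Finset.sum_congr rfl
            intro j _
            ring
        _ = ∑ j ∈ T, ∑ ℓ ∈ T, q j * (v ℓ * G ℓ j) := Finset.sum_comm
        _ = ∑ j ∈ T, q j * κ τ (θs j) := by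
            apply Finset.sum_congr rfl
            intro j hj
            rw [← Finset.mul_sum]
            congr 1
            have e : ∑ ℓ ∈ T, v ℓ * G ℓ j = ∑ ℓ ∈ T, v ℓ * G j ℓ :=
              Finset.sum_congr rfl fun ℓ _ => by rw [hGsymm ℓ j]
            rw [e]
            exact hv j hj
    have e2 : ∑ j ∈ T, c j * κ τ (θs j) = t * ∑ j ∈ T, q j * κ τ (θs j) := by
      rw [Finset.mul_sum]
      apply Finset.sum_congr rfl
      intro j _
      rw [hcdef]
      ring
    rw [e2] at hcert
    rw [hid]
    nlinarith [hcert, ht]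
  -- RPOS
  have hRPOS : ∀ ℓ0, ℓ0 ∉ T → ∀ v : Fin k → ℝ,
      (∀ ℓ' ∈ T, ∑ j ∈ T, v j * G ℓ' j = G ℓ' ℓ0) →
      ∀ θ' : Fin D → ℝ, ∑ ℓ ∈ T, v ℓ * κ θ' (θs ℓ) ≤ κ θ' (θs ℓ0) := by
    intro ℓ0 hℓ0 v hv θ'
    have hv' : ∀ ℓ' ∈ T, ∑ j ∈ T, v j * G ℓ' j = κ (θs ℓ0) (θs ℓ') := by
      intro ℓ' hℓ'
      rw [hv ℓ' hℓ', hG, kappa_symm a κ hκ]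
    have hvnn : ∀ ℓ ∈ T, 0 ≤ v ℓ := hPOS (θs ℓ0) v hv'
    have hτ0 : ∀ ℓ ∈ T, θs ℓ0 ≠ θs ℓ := by
      intro ℓ hℓ h
      rw [hinj h] at hℓ0
      exact hℓ0 hℓ
    have hvmass : ∑ ℓ ∈ T, v ℓ < 1 := hMASS (θs ℓ0) hτ0 v hv'
    set T'' := T.filter (fun j => 0 < v j) with hT''def
    have hsub : T'' ⊆ T := Finset.filter_subset _ _
    have hvzero : ∀ x ∈ T, x ∉ T'' → v x = 0 := by
      intro x hx hx'
      rw [hT''def, Finset.mem_filter] at hx'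
      push_neg at hx'
      exact le_antisymm (hx' hx) (hvnn x hx)
    rcases T''.eq_empty_or_nonempty with hT''e | hT''ne
    · have : ∑ ℓ ∈ T, v ℓ * κ θ' (θs ℓ) = 0 := by
        apply Finset.sum_eq_zero
        intro ℓ hℓ
        rw [hvzero ℓ hℓ (by rw [hT''e]; exact Finset.notMem_empty ℓ), zero_mul]
      rw [this]
      exact kappa_nonneg κ hker _ _
    · have hpos'' : ∀ ℓ ∈ T'', 0 < v ℓ := fun ℓ hℓ => (Finset.mem_filter.mp hℓ).2
      have hsum'' : ∑ ℓ ∈ T'', v ℓ < 1 := by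
        rw [Finset.sum_subset hsub hvzero]
        exact hvmass
      have hℓ0'' : ℓ0 ∉ T'' := fun h => hℓ0 (hsub h)
      have hhyp : ∀ ℓ' ∈ T'',
          (∑ j ∈ T'', v j * κ (θs ℓ') (θs j)) - κ (θs ℓ') (θs ℓ0) ≤ 0 := by
        intro ℓ' hℓ'
        have e1 : ∑ j ∈ T'', v j * κ (θs ℓ') (θs j) = ∑ j ∈ T, v j * κ (θs ℓ') (θs j) :=
          Finset.sum_subset hsub fun x hx hx' => by rw [hvzero x hx hx', zero_mul]
        have e2 : ∑ j ∈ T, v j * κ (θs ℓ') (θs j) = ∑ j ∈ T, v j * G ℓ' j := by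
          apply Finset.sum_congr rfl
          intro j _
          rw [hG]
        rw [e1, e2, hv ℓ' (hsub hℓ'), hG]
        simp
      have hconc := (hsupp T'' hT''ne v hpos'' hsum'').2 ℓ0 hℓ0'' hhyp θ'
      have e3 : ∑ j ∈ T'', v j * κ θ' (θs j) = ∑ j ∈ T, v j * κ θ' (θs j) :=
        Finset.sum_subset hsub fun x hx hx' => by rw [hvzero x hx hx', zero_mul]
      rw [e3] at hconc
      linarith
  exact ⟨hPOS, hMASS, hRPOS⟩

end Aux

/-- if the kernel is admissible and the support is admissible with
respect to it, then the Gram matrix is invertible and the exact recovery condition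
`‖G⁻¹ g_θ‖₁ < 1` holds for every `θ` outside the support. -/
theorem erc_of_admissible
    {D k : ℕ} (hD : 1 ≤ D) {H : Type*} [NormedAddCommGroup H]
    [InnerProductSpace ℝ H] [CompleteSpace H]
    (a : (Fin D → ℝ) → H)
    (κ : (Fin D → ℝ) → (Fin D → ℝ) → ℝ)
    (hκ : ∀ θ θ' : Fin D → ℝ, κ θ θ' = inner ℝ (a θ) (a θ'))
    (hker : AdmissibleKernel κ)
    (θs : Fin k → (Fin D → ℝ)) (hinj : Function.Injective θs)
    (hsupp : AdmissibleSupport κ θs)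
    (G : Matrix (Fin k) (Fin k) ℝ)
    (hG : ∀ ℓ ℓ', G ℓ ℓ' = κ (θs ℓ) (θs ℓ')) :
    IsUnit G.det ∧
    ∀ θ : Fin D → ℝ, (∀ ℓ, θ ≠ θs ℓ) →
      ∑ ℓ, |(G⁻¹.mulVec fun ℓ' => κ θ (θs ℓ')) ℓ| < 1 := by
  classical
  have hGram : ∀ i j, G i j = (inner ℝ (a (θs i)) (a (θs j)) : ℝ) := fun i j => by
    rw [hG, hκ]
  have hindep := indep a κ hκ hker θs hinj hsupp
  have hdet : IsUnit G.det := by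
    rw [isUnit_iff_ne_zero]
    intro h0
    obtain ⟨w, hw0, hGw⟩ := Matrix.exists_mulVec_eq_zero_iff.mpr h0
    apply hw0
    apply hindep
    have hzz : (inner ℝ (∑ j, w j • a (θs j)) (∑ j, w j • a (θs j)) : ℝ) = 0 := by
      rw [sum_inner]
      apply Finset.sum_eq_zero
      intro i _
      rw [real_inner_smul_left, inner_sum]
      have e : ∀ j : Fin k, (inner ℝ (a (θs i)) (w j • a (θs j)) : ℝ) = G i j * w j := by
        intro j
        rw [real_inner_smul_right, hGram]
        ring
      rw [Finset.sum_congr rfl fun j _ => e j]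
      have : ∑ j, G i j * w j = G.mulVec w i := by
        rw [Matrix.mulVec, dotProduct]
      rw [this, hGw]
      simp
    exact inner_self_eq_zero.mp hzz
  refine ⟨hdet, ?_⟩
  intro θ hθ
  set g : Fin k → ℝ := fun ℓ' => κ θ (θs ℓ') with hgdef
  set v := G⁻¹.mulVec g with hvdef
  have hGv : G.mulVec v = g := by
    rw [hvdef, Matrix.mulVec_mulVec, Matrix.mul_nonsing_inv G hdet, Matrix.one_mulVec]
  have hrows : ∀ ℓ' ∈ Finset.univ, ∑ j ∈ Finset.univ, v j * G ℓ' j = κ θ (θs ℓ') := by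
    intro ℓ' _
    have h1 := congrFun hGv ℓ'
    rw [Matrix.mulVec, dotProduct] at h1
    show (∑ j ∈ Finset.univ, v j * G ℓ' j) = g ℓ'
    rw [← h1]
    apply Finset.sum_congr rfl
    intros
    ring
  obtain ⟨hPOS, hMASS, _⟩ := main_ind a κ hκ hker θs hinj hsupp G hG Finset.univ
  have h1 := hPOS θ v hrows
  have h2 := hMASS θ (fun ℓ _ => hθ ℓ) v hrows
  calc ∑ ℓ, |v ℓ| = ∑ ℓ, v ℓ :=
        Finset.sum_congr rfl fun ℓ _ => abs_of_nonneg (h1 ℓ (Finset.mem_univ ℓ))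
    _ < 1 := h2
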